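/- arXiv:2511.04535 — 2 statements merged into one kernel-verified Lean document; each statement's English description precedes it below -/
import Mathlib

section
/- Let $d = 1$ and $\alpha > 0$. Define $g_\alpha^a(x) = \int_0^\infty e^{-\alpha t} p_t(a,x)\,dt$ where $p_t$ is the one-dimensional Gaussian heat kernel. For every $\gamma \in (0,1)$ there exists a constant $C_{\alpha,\gamma} > 0$ such that for all $x, a, b \in \mathbb{R}$, $|g_\alpha^a(x) - g_\alpha^b(x)| \le C_{\alpha,\gamma} |a-b|^\gamma$. -/
open MeasureTheory Real Set

/-- The one-dimensional Gaussian heat kernel. -/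
noncomputable def heatKernel1 (t a x : ℝ) : ℝ :=
  (2 * π * t) ^ (-(1 : ℝ) / 2) * Real.exp (-|x - a| ^ 2 / (2 * t))

/-- The `α`-resolvent kernel `g_α^a(x) = ∫_0^∞ e^{-αt} p_t(a,x) dt` in dimension one. -/
noncomputable def gRes1 (α a x : ℝ) : ℝ :=
  ∫ t in Ioi (0 : ℝ), Real.exp (-α * t) * heatKernel1 t a x

lemma integAux (α s : ℝ) (hα : 0 < α) (hs : s < 1) :
    IntegrableOn (fun t : ℝ => Real.exp (-α * t) * t ^ (-s)) (Ioi 0) := by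
  have h := integrableOn_rpow_mul_exp_neg_mul_rpow (p := 1) (s := -s) (b := α)
    (by linarith) one_pos hα
  refine h.congr_fun (fun t ht => ?_) measurableSet_Ioi
  simp only [Real.rpow_one]
  ring

lemma gaussAux (t u : ℝ) (ht : 0 < t) : |u| * Real.exp (-u ^ 2 / (2 * t)) ≤ Real.sqrt t := by
  have h1 := Real.add_one_le_exp (u ^ 2 / (2 * t))
  have h2 : Real.exp (-u ^ 2 / (2 * t)) = (Real.exp (u ^ 2 / (2 * t)))⁻¹ := by
    rw [← Real.exp_neg]; ring_nf
  have h3 : (Real.sqrt t) ^ 2 = t := Real.sq_sqrt ht.le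
  have h4 : 0 < Real.sqrt t := Real.sqrt_pos.2 ht
  have h5 : 0 < Real.exp (u ^ 2 / (2 * t)) := Real.exp_pos _
  rw [h2]
  rw [mul_inv_le_iff₀ h5]
  have key0 : |u| * (2 * t) ≤ Real.sqrt t * (u ^ 2 + 2 * t) := by
    have h6 := sq_nonneg (|u| - Real.sqrt t)
    have hu : |u| ^ 2 = u ^ 2 := sq_abs u
    nlinarith [mul_nonneg h4.le h6, h3, h4, ht]
  have key : |u| ≤ Real.sqrt t * (u ^ 2 / (2 * t) + 1) := by
    rw [div_add' _ _ _ (by positivity), ← mul_div_assoc, le_div_iff₀ (by positivity)]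
    calc |u| * (2 * t) ≤ Real.sqrt t * (u ^ 2 + 2 * t) := key0
      _ = Real.sqrt t * (u ^ 2 + 1 * (2 * t)) := by ring
  calc |u| ≤ Real.sqrt t * (u ^ 2 / (2 * t) + 1) := key
    _ ≤ Real.sqrt t * Real.exp (u ^ 2 / (2 * t)) := by
        apply mul_le_mul_of_nonneg_left h1 h4.le

lemma expsqLip (t : ℝ) (ht : 0 < t) (u v : ℝ) :
    |Real.exp (-u ^ 2 / (2 * t)) - Real.exp (-v ^ 2 / (2 * t))| ≤ (Real.sqrt t)⁻¹ * |u - v| := by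
  have h4 : 0 < Real.sqrt t := Real.sqrt_pos.2 ht
  have hderiv : ∀ w : ℝ, HasDerivAt (fun u : ℝ => Real.exp (-u ^ 2 / (2 * t)))
      (Real.exp (-w ^ 2 / (2 * t)) * (-(2 * w) / (2 * t))) w := by
    intro w
    have h1 : HasDerivAt (fun u : ℝ => -u ^ 2 / (2 * t)) (-(2 * w) / (2 * t)) w := by
      have := ((hasDerivAt_pow 2 w).neg).div_const (2 * t)
      simpa using this
    exact h1.exp
  have hbound : ∀ w : ℝ, ‖Real.exp (-w ^ 2 / (2 * t)) * (-(2 * w) / (2 * t))‖ ≤ (Real.sqrt t)⁻¹ := by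
    intro w
    have hg := gaussAux t w ht
    have hE : 0 < Real.exp (-w ^ 2 / (2 * t)) := Real.exp_pos _
    have : ‖Real.exp (-w ^ 2 / (2 * t)) * (-(2 * w) / (2 * t))‖
        = |w| * Real.exp (-w ^ 2 / (2 * t)) / t := by
      rw [Real.norm_eq_abs, abs_mul, abs_of_pos hE, abs_div]
      rw [abs_of_pos (by positivity : (0:ℝ) < 2 * t), abs_neg, abs_mul, abs_two]
      ring
    rw [this]
    rw [div_le_iff₀ ht]
    calc |w| * Real.exp (-w ^ 2 / (2 * t)) ≤ Real.sqrt t := hg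
      _ = (Real.sqrt t)⁻¹ * t := by rw [inv_mul_eq_div, Real.div_sqrt]
  have := Convex.norm_image_sub_le_of_norm_hasDerivWithin_le
    (f := fun u : ℝ => Real.exp (-u ^ 2 / (2 * t)))
    (f' := fun w => Real.exp (-w ^ 2 / (2 * t)) * (-(2 * w) / (2 * t)))
    (fun w _ => (hderiv w).hasDerivWithinAt) (fun w _ => hbound w) convex_univ
    (mem_univ v) (mem_univ u)
  simpa [Real.norm_eq_abs] using this

lemma interpAux {m A B γ : ℝ} (hm : 0 ≤ m) (hA : 0 ≤ A) (hmA : m ≤ A) (hmB : m ≤ B)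
    (hγ0 : 0 < γ) (hγ1 : γ < 1) : m ≤ A ^ γ * B ^ (1 - γ) := by
  calc m = m ^ γ * m ^ (1 - γ) := by
        rw [← Real.rpow_add' hm (by norm_num)]
        norm_num
    _ ≤ A ^ γ * B ^ (1 - γ) := by
        apply mul_le_mul (Real.rpow_le_rpow hm hmA hγ0.le)
          (Real.rpow_le_rpow hm hmB (by linarith)) (Real.rpow_nonneg hm _)
          (Real.rpow_nonneg hA _)


lemma kerBound (γ : ℝ) (hγ0 : 0 < γ) (hγ1 : γ < 1) (t : ℝ) (ht : 0 < t) (x a b : ℝ) :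
    |heatKernel1 t a x - heatKernel1 t b x| ≤
      (2 * π) ^ (-(1 : ℝ) / 2) * 2 ^ (1 - γ) * t ^ (-(1 + γ) / 2) * |a - b| ^ γ := by
  have hπ : (0:ℝ) < 2 * π := by positivity
  have hc : (0:ℝ) < (2 * π * t) ^ (-(1 : ℝ) / 2) := Real.rpow_pos_of_pos (by positivity) _
  set Ea := Real.exp (-|x - a| ^ 2 / (2 * t)) with hEa
  set Eb := Real.exp (-|x - b| ^ 2 / (2 * t)) with hEb
  have hm : |heatKernel1 t a x - heatKernel1 t b x| = (2 * π * t) ^ (-(1 : ℝ) / 2) * |Ea - Eb| := by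
    rw [heatKernel1, heatKernel1, ← mul_sub, abs_mul, abs_of_pos hc]
  -- bound |Ea - Eb|
  have hlip : |Ea - Eb| ≤ (Real.sqrt t)⁻¹ * |a - b| := by
    have h1 := expsqLip t ht |x - a| |x - b|
    have h2 : abs (|x - a| - |x - b|) ≤ |a - b| := by
      have h4 := abs_abs_sub_abs_le_abs_sub (x - a) (x - b)
      have h3 : (x - a) - (x - b) = b - a := by ring
      rw [h3, abs_sub_comm b a] at h4
      exact h4
    calc |Ea - Eb| ≤ (Real.sqrt t)⁻¹ * abs (|x - a| - |x - b|) := h1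
      _ ≤ (Real.sqrt t)⁻¹ * |a - b| := by
          apply mul_le_mul_of_nonneg_left h2 (by positivity)
  have hbd : |Ea - Eb| ≤ 2 := by
    have ha1 : Ea ≤ 1 := Real.exp_le_one_iff.2
      (div_nonpos_of_nonpos_of_nonneg (neg_nonpos.2 (by positivity)) (by positivity))
    have hb1 : Eb ≤ 1 := Real.exp_le_one_iff.2
      (div_nonpos_of_nonpos_of_nonneg (neg_nonpos.2 (by positivity)) (by positivity))
    have ha0 : 0 < Ea := Real.exp_pos _
    have hb0 : 0 < Eb := Real.exp_pos _
    rw [abs_le]; constructor <;> nlinarith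
  have hinterp : |Ea - Eb| ≤ ((Real.sqrt t)⁻¹ * |a - b|) ^ γ * 2 ^ (1 - γ) :=
    interpAux (abs_nonneg _) (by positivity) hlip hbd hγ0 hγ1
  -- rewrite powers
  have hsqrt : (Real.sqrt t)⁻¹ = t ^ (-(1:ℝ)/2) := by
    rw [Real.sqrt_eq_rpow, ← Real.rpow_neg ht.le]
    norm_num
  have hsplit : (2 * π * t) ^ (-(1 : ℝ) / 2)
      = (2 * π) ^ (-(1 : ℝ) / 2) * t ^ (-(1:ℝ)/2) := by
    rw [Real.mul_rpow hπ.le ht.le]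
  have hpowmul : (t ^ (-(1:ℝ)/2)) ^ γ = t ^ (-γ/2) := by
    rw [← Real.rpow_mul ht.le]
    congr 1
    ring
  have hmul : ((Real.sqrt t)⁻¹ * |a - b|) ^ γ = t ^ (-γ/2) * |a - b| ^ γ := by
    rw [Real.mul_rpow (by positivity) (abs_nonneg _), hsqrt, hpowmul]
  have htt : t ^ (-(1:ℝ)/2) * t ^ (-γ/2) = t ^ (-(1 + γ) / 2) := by
    rw [← Real.rpow_add ht]
    congr 1
    ring
  rw [hm, hsplit]
  calc (2 * π) ^ (-(1:ℝ) / 2) * t ^ (-(1:ℝ)/2) * |Ea - Eb|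
      ≤ (2 * π) ^ (-(1:ℝ) / 2) * t ^ (-(1:ℝ)/2) * (((Real.sqrt t)⁻¹ * |a - b|) ^ γ * 2 ^ (1 - γ)) := by
        apply mul_le_mul_of_nonneg_left hinterp (by positivity)
    _ = (2 * π) ^ (-(1:ℝ) / 2) * 2 ^ (1 - γ) * (t ^ (-(1:ℝ)/2) * t ^ (-γ/2)) * |a - b| ^ γ := by
        rw [hmul]; ring
    _ = (2 * π) ^ (-(1:ℝ) / 2) * 2 ^ (1 - γ) * t ^ (-(1 + γ) / 2) * |a - b| ^ γ := by
        rw [htt]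

lemma hkPos (t a x : ℝ) (ht : 0 < t) : 0 < heatKernel1 t a x := by
  rw [heatKernel1]
  have h : (0:ℝ) < 2 * π * t := by positivity
  exact mul_pos (Real.rpow_pos_of_pos h _) (Real.exp_pos _)

lemma hkLe (t a x : ℝ) (ht : 0 < t) :
    heatKernel1 t a x ≤ (2 * π) ^ (-(1:ℝ)/2) * t ^ (-(1:ℝ)/2) := by
  rw [heatKernel1, Real.mul_rpow (by positivity) ht.le]
  have h1 : Real.exp (-|x - a| ^ 2 / (2 * t)) ≤ 1 := Real.exp_le_one_iff.2
    (div_nonpos_of_nonpos_of_nonneg (neg_nonpos.2 (by positivity)) (by positivity))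
  calc (2 * π) ^ (-(1:ℝ)/2) * t ^ (-(1:ℝ)/2) * Real.exp (-|x - a| ^ 2 / (2 * t))
      ≤ (2 * π) ^ (-(1:ℝ)/2) * t ^ (-(1:ℝ)/2) * 1 := by
        apply mul_le_mul_of_nonneg_left h1 (by positivity)
    _ = (2 * π) ^ (-(1:ℝ)/2) * t ^ (-(1:ℝ)/2) := mul_one _

lemma contOnAux (α a x : ℝ) :
    ContinuousOn (fun t : ℝ => Real.exp (-α * t) * heatKernel1 t a x) (Ioi 0) := by
  apply ContinuousOn.mul
  · exact (Real.continuous_exp.comp (continuous_const.mul continuous_id)).continuousOn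
  · unfold heatKernel1
    apply ContinuousOn.mul
    · apply ContinuousOn.rpow_const (continuous_const.mul continuous_id).continuousOn
      intro t ht
      have h : (0:ℝ) < t := ht
      exact Or.inl (ne_of_gt (by exact mul_pos (by positivity) h))
    · apply Real.continuous_exp.comp_continuousOn
      apply ContinuousOn.div continuousOn_const (continuous_const.mul continuous_id).continuousOn
      intro t ht
      have h : (0:ℝ) < t := ht
      exact ne_of_gt (mul_pos (by norm_num) h)

lemma integF (α : ℝ) (hα : 0 < α) (a x : ℝ) :
    IntegrableOn (fun t : ℝ => Real.exp (-α * t) * heatKernel1 t a x) (Ioi 0) := by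
  have hb : IntegrableOn
      (fun t : ℝ => (2 * π) ^ (-(1:ℝ)/2) * (Real.exp (-α * t) * t ^ (-(1:ℝ)/2))) (Ioi 0) := by
    have h : IntegrableOn
        (fun t : ℝ => (2 * π) ^ (-(1:ℝ)/2) * (Real.exp (-α * t) * t ^ (-(1/2 : ℝ)))) (Ioi 0) :=
      (integAux α (1/2) hα (by norm_num)).const_mul ((2 * π) ^ (-(1:ℝ)/2))
    refine h.congr_fun (fun t ht => ?_) measurableSet_Ioi
    norm_num
  apply Integrable.mono' hb
    ((contOnAux α a x).aestronglyMeasurable measurableSet_Ioi)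
  filter_upwards [ae_restrict_mem measurableSet_Ioi] with t ht
  have ht0 : 0 < t := ht
  rw [Real.norm_eq_abs, abs_of_pos (mul_pos (Real.exp_pos _) (hkPos t a x ht0))]
  calc Real.exp (-α * t) * heatKernel1 t a x
      ≤ Real.exp (-α * t) * ((2 * π) ^ (-(1:ℝ)/2) * t ^ (-(1:ℝ)/2)) := by
        apply mul_le_mul_of_nonneg_left (hkLe t a x ht0) (Real.exp_pos _).le
    _ = (2 * π) ^ (-(1:ℝ)/2) * (Real.exp (-α * t) * t ^ (-(1:ℝ)/2)) := by ring

theorem stmt4 (α : ℝ) (hα : 0 < α) (γ : ℝ) (hγ0 : 0 < γ) (hγ1 : γ < 1) :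
    ∃ C > 0, ∀ x a b : ℝ, |gRes1 α a x - gRes1 α b x| ≤ C * |a - b| ^ γ := by
  set K := (2 * π) ^ (-(1:ℝ)/2) * 2 ^ (1 - γ) with hK
  have hK0 : 0 ≤ K := by
    rw [hK]
    positivity
  set I := ∫ t in Ioi (0:ℝ), Real.exp (-α * t) * t ^ (-(1 + γ)/2) with hI
  have hI0 : 0 ≤ I := setIntegral_nonneg measurableSet_Ioi (fun t ht =>
    mul_nonneg (Real.exp_pos _).le (Real.rpow_nonneg (le_of_lt ht) _))
  have hIint : IntegrableOn (fun t : ℝ => Real.exp (-α * t) * t ^ (-(1 + γ)/2)) (Ioi 0) := by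
    have h := integAux α ((1 + γ)/2) hα (by linarith)
    refine h.congr_fun (fun t ht => ?_) measurableSet_Ioi
    rw [neg_div]
  refine ⟨K * I + 1, by nlinarith [mul_nonneg hK0 hI0], ?_⟩
  intro x a b
  have hfa := integF α hα a x
  have hfb := integF α hα b x
  have key : |gRes1 α a x - gRes1 α b x| ≤ K * |a - b| ^ γ * I := by
    rw [gRes1, gRes1, ← integral_sub hfa hfb]
    have step1 : |∫ t in Ioi (0:ℝ), (Real.exp (-α * t) * heatKernel1 t a x
        - Real.exp (-α * t) * heatKernel1 t b x)|
        ≤ ∫ t in Ioi (0:ℝ), ‖Real.exp (-α * t) * heatKernel1 t a x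
          - Real.exp (-α * t) * heatKernel1 t b x‖ := by
      rw [← Real.norm_eq_abs]
      exact norm_integral_le_integral_norm _
    have step2 : ∫ t in Ioi (0:ℝ), ‖Real.exp (-α * t) * heatKernel1 t a x
          - Real.exp (-α * t) * heatKernel1 t b x‖
        ≤ ∫ t in Ioi (0:ℝ), (K * |a - b| ^ γ) * (Real.exp (-α * t) * t ^ (-(1 + γ)/2)) := by
      apply setIntegral_mono_on ((hfa.sub hfb).norm) (hIint.const_mul _) measurableSet_Ioi
      intro t ht
      have ht0 : 0 < t := ht
      have hker := kerBound γ hγ0 hγ1 t ht0 x a b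
      simp only [Pi.sub_apply]
      rw [Real.norm_eq_abs, ← mul_sub, abs_mul, abs_of_pos (Real.exp_pos _)]
      calc Real.exp (-α * t) * |heatKernel1 t a x - heatKernel1 t b x|
          ≤ Real.exp (-α * t) *
            ((2 * π) ^ (-(1:ℝ)/2) * 2 ^ (1 - γ) * t ^ (-(1 + γ)/2) * |a - b| ^ γ) :=
            mul_le_mul_of_nonneg_left hker (Real.exp_pos _).le
        _ = (K * |a - b| ^ γ) * (Real.exp (-α * t) * t ^ (-(1 + γ)/2)) := by
            rw [hK]; ring
    have step3 : ∫ t in Ioi (0:ℝ), (K * |a - b| ^ γ) * (Real.exp (-α * t) * t ^ (-(1 + γ)/2))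
        = (K * |a - b| ^ γ) * I := by
      rw [hI, integral_const_mul]
    calc |∫ t in Ioi (0:ℝ), (Real.exp (-α * t) * heatKernel1 t a x
        - Real.exp (-α * t) * heatKernel1 t b x)| ≤ _ := step1
      _ ≤ _ := step2
      _ = (K * |a - b| ^ γ) * I := step3
      _ = K * |a - b| ^ γ * I := by ring
  have habs : 0 ≤ |a - b| ^ γ := Real.rpow_nonneg (abs_nonneg _) _
  calc |gRes1 α a x - gRes1 α b x| ≤ K * |a - b| ^ γ * I := key
    _ = (K * I) * |a - b| ^ γ := by ring
    _ ≤ (K * I + 1) * |a - b| ^ γ := by nlinarith [mul_nonneg hK0 hI0]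
end

section
/- Let $d = 1$ and $\alpha > 0$. Define $g_\alpha^x(y) = \int_0^\infty e^{-\alpha t} p_t(x,y)\,dt$ and $g_{\alpha,\varepsilon}^x(y) = \int_0^\infty e^{-\alpha t} p_{t+\varepsilon}(x,y)\,dt$ for $\varepsilon > 0$. Then $\eta(\varepsilon) := \sup_{x, y \in \mathbb{R}} |g_{\alpha,\varepsilon}^x(y) - g_\alpha^x(y)| \to 0$ as $\varepsilon \downarrow 0$. -/
open MeasureTheory Real Set Filter

/-- The regularized `α`-resolvent kernel in dimension one. -/
noncomputable def gResReg1 (α ε a x : ℝ) : ℝ :=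
  ∫ t in Ioi (0 : ℝ), Real.exp (-α * t) * heatKernel1 (t + ε) a x

lemma hk_nonneg {t : ℝ} (ht : 0 < t) (a x : ℝ) : 0 ≤ heatKernel1 t a x := by
  unfold heatKernel1
  have h1 : (0:ℝ) < 2 * π * t := by positivity
  positivity

lemma hk_le {t : ℝ} (ht : 0 < t) (a x : ℝ) :
    heatKernel1 t a x ≤ (2 * π) ^ (-(1 : ℝ) / 2) * t ^ (-(1 : ℝ) / 2) := by
  unfold heatKernel1
  have h1 : (2 * π * t) ^ (-(1 : ℝ) / 2) = (2 * π) ^ (-(1:ℝ)/2) * t ^ (-(1:ℝ)/2) :=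
    Real.mul_rpow (by positivity) ht.le
  rw [h1]
  have h2 : Real.exp (-|x - a| ^ 2 / (2 * t)) ≤ 1 := by
    rw [Real.exp_le_one_iff]
    apply div_nonpos_of_nonpos_of_nonneg
    · simp only [neg_nonpos]; positivity
    · linarith
  have h3 : (0:ℝ) ≤ (2 * π) ^ (-(1:ℝ)/2) * t ^ (-(1:ℝ)/2) := by positivity
  calc (2 * π) ^ (-(1:ℝ)/2) * t ^ (-(1:ℝ)/2) * Real.exp (-|x - a| ^ 2 / (2 * t))
      ≤ (2 * π) ^ (-(1:ℝ)/2) * t ^ (-(1:ℝ)/2) * 1 := mul_le_mul_of_nonneg_left h2 h3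
    _ = (2 * π) ^ (-(1:ℝ)/2) * t ^ (-(1:ℝ)/2) := by ring

/-- Dominating function. -/
noncomputable def phi (α t : ℝ) : ℝ :=
  (2 * π) ^ (-(1 : ℝ) / 2) * t ^ (-(1 : ℝ) / 2) * Real.exp (-α * t)

lemma F_le_phi {α t : ℝ} (hα : 0 < α) (ht : 0 < t) (a x : ℝ) :
    Real.exp (-α * t) * heatKernel1 t a x ≤ phi α t := by
  unfold phi
  have := hk_le ht a x
  calc Real.exp (-α * t) * heatKernel1 t a x
      ≤ Real.exp (-α * t) * ((2 * π) ^ (-(1:ℝ)/2) * t ^ (-(1:ℝ)/2)) :=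
        mul_le_mul_of_nonneg_left this (Real.exp_pos _).le
    _ = (2 * π) ^ (-(1:ℝ)/2) * t ^ (-(1:ℝ)/2) * Real.exp (-α * t) := by ring

lemma phi_nonneg {t : ℝ} (α : ℝ) (ht : 0 ≤ t) : 0 ≤ phi α t := by
  unfold phi; positivity

lemma phi_integrable {α : ℝ} (hα : 0 < α) : IntegrableOn (phi α) (Ioi 0) := by
  have h := integrableOn_rpow_mul_exp_neg_mul_rpow (p := 1) (s := -(1:ℝ)/2) (b := α)
    (by norm_num) one_pos hα
  have h2 : IntegrableOn (fun t : ℝ => t ^ (-(1:ℝ)/2) * Real.exp (-α * t)) (Ioi 0) := by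
    refine h.congr_fun (fun t ht => ?_) measurableSet_Ioi
    simp only [Real.rpow_one]
  have h3 : IntegrableOn (fun t : ℝ => (2 * π) ^ (-(1:ℝ)/2) * (t ^ (-(1:ℝ)/2) * Real.exp (-α * t))) (Ioi 0) := h2.const_mul _
  refine h3.congr_fun (fun t ht => ?_) measurableSet_Ioi
  unfold phi; ring

lemma F_meas (α a x : ℝ) :
    Measurable (fun t : ℝ => Real.exp (-α * t) * heatKernel1 t a x) := by
  unfold heatKernel1
  fun_prop

lemma F_integrableOn {α : ℝ} (hα : 0 < α) (a x : ℝ) :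
    IntegrableOn (fun t : ℝ => Real.exp (-α * t) * heatKernel1 t a x) (Ioi 0) := by
  refine (phi_integrable hα).mono' ((F_meas α a x).aestronglyMeasurable) ?_
  rw [ae_restrict_iff' measurableSet_Ioi]
  filter_upwards with t ht
  have ht' : (0:ℝ) < t := ht
  rw [Real.norm_eq_abs,
    abs_of_nonneg (mul_nonneg (Real.exp_pos _).le (hk_nonneg ht' a x))]
  exact F_le_phi hα ht' a x

lemma shift_eq (α : ℝ) {ε : ℝ} (hε : 0 < ε) (a x : ℝ) :
    gResReg1 α ε a x =
      Real.exp (α * ε) * ∫ t in Ioi ε, Real.exp (-α * t) * heatKernel1 t a x := by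
  unfold gResReg1
  have h1 : ∀ t : ℝ, Real.exp (-α * t) * heatKernel1 (t + ε) a x
      = Real.exp (α * ε) * (Real.exp (-α * (t + ε)) * heatKernel1 (t + ε) a x) := by
    intro t
    rw [← mul_assoc, ← Real.exp_add]
    congr 2
    ring
  simp_rw [h1]
  rw [integral_const_mul]
  congr 1
  set F : ℝ → ℝ := fun t => Real.exp (-α * t) * heatKernel1 t a x with hF
  have key : ∀ t : ℝ, (Ioi (0:ℝ)).indicator (fun s => F (s + ε)) t
      = (Ioi ε).indicator F (t + ε) := by
    intro t
    by_cases h : t ∈ Ioi (0:ℝ)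
    · rw [indicator_of_mem h, indicator_of_mem]
      simp only [mem_Ioi] at h ⊢
      linarith
    · rw [indicator_of_notMem h, indicator_of_notMem]
      simp only [mem_Ioi, not_lt] at h ⊢
      linarith
  rw [← integral_indicator measurableSet_Ioi, ← integral_indicator measurableSet_Ioi]
  refine (integral_congr_ae (ae_of_all _ key)).trans ?_
  exact integral_add_right_eq_self ((Ioi ε).indicator F) ε

lemma split_eq {α : ℝ} (hα : 0 < α) {ε : ℝ} (hε : 0 < ε) (a x : ℝ) :
    gRes1 α a x = (∫ t in Ioc 0 ε, Real.exp (-α * t) * heatKernel1 t a x)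
      + ∫ t in Ioi ε, Real.exp (-α * t) * heatKernel1 t a x := by
  unfold gRes1
  rw [← setIntegral_union (Ioc_disjoint_Ioi le_rfl) measurableSet_Ioi
    ((F_integrableOn hα a x).mono_set Ioc_subset_Ioi_self)
    ((F_integrableOn hα a x).mono_set (Ioi_subset_Ioi hε.le)),
    Ioc_union_Ioi_eq_Ioi hε.le]

lemma sqrt_integral {ε : ℝ} (hε : 0 < ε) :
    ∫ t in Ioc (0:ℝ) ε, t ^ (-(1:ℝ)/2) = 2 * Real.sqrt ε := by
  rw [← intervalIntegral.integral_of_le hε.le,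
    integral_rpow (Or.inl (by norm_num : (-1:ℝ) < -(1:ℝ)/2))]
  have h1 : (-(1:ℝ)/2 + 1) = 1/2 := by norm_num
  rw [h1, Real.zero_rpow (by norm_num), Real.sqrt_eq_rpow]
  ring

theorem stmt13 (α : ℝ) (hα : 0 < α) :
    Tendsto (fun ε : ℝ => ⨆ x : ℝ, ⨆ y : ℝ, |gResReg1 α ε x y - gRes1 α x y|)
      (nhdsWithin 0 (Ioi 0)) (nhds 0) := by
  set C := ∫ t in Ioi (0:ℝ), phi α t with hCdef
  have hC : 0 ≤ C :=
    setIntegral_nonneg measurableSet_Ioi fun t ht => phi_nonneg α (le_of_lt ht)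
  set B : ℝ → ℝ := fun ε => (Real.exp (α * ε) - 1) * C
      + (2 * π) ^ (-(1:ℝ)/2) * (2 * Real.sqrt ε) with hBdef
  have hBnonneg : ∀ ε : ℝ, 0 < ε → 0 ≤ B ε := by
    intro ε hε
    have h1 : (1:ℝ) ≤ Real.exp (α * ε) := Real.one_le_exp (by positivity)
    have h2 : (0:ℝ) ≤ Real.sqrt ε := Real.sqrt_nonneg ε
    have h3 : (0:ℝ) ≤ (2 * π) ^ (-(1:ℝ)/2) := by positivity
    simp only [hBdef]
    nlinarith
  -- key pointwise bound
  have key : ∀ ε : ℝ, 0 < ε → ∀ a x : ℝ, |gResReg1 α ε a x - gRes1 α a x| ≤ B ε := by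
    intro ε hε a x
    set I1 := ∫ t in Ioi ε, Real.exp (-α * t) * heatKernel1 t a x with hI1
    set I0 := ∫ t in Ioc (0:ℝ) ε, Real.exp (-α * t) * heatKernel1 t a x with hI0
    have hI1nonneg : 0 ≤ I1 :=
      setIntegral_nonneg measurableSet_Ioi fun t ht =>
        mul_nonneg (Real.exp_pos _).le (hk_nonneg (lt_trans hε ht) a x)
    have hI0nonneg : 0 ≤ I0 :=
      setIntegral_nonneg measurableSet_Ioc fun t ht =>
        mul_nonneg (Real.exp_pos _).le (hk_nonneg ht.1 a x)
    have hphiae : 0 ≤ᵐ[volume.restrict (Ioi (0:ℝ))] phi α := by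
      rw [EventuallyLE, ae_restrict_iff' measurableSet_Ioi]
      exact ae_of_all _ fun t ht => phi_nonneg α (le_of_lt ht)
    have hI1le : I1 ≤ C := by
      have s1 : I1 ≤ ∫ t in Ioi ε, phi α t := by
        refine setIntegral_mono_on
          ((F_integrableOn hα a x).mono_set (Ioi_subset_Ioi hε.le))
          ((phi_integrable hα).mono_set (Ioi_subset_Ioi hε.le))
          measurableSet_Ioi fun t ht => F_le_phi hα (lt_trans hε ht) a x
      have s2 : ∫ t in Ioi ε, phi α t ≤ C :=
        setIntegral_mono_set (phi_integrable hα) hphiae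
          (HasSubset.Subset.eventuallyLE (Ioi_subset_Ioi hε.le))
      linarith
    have hI0le : I0 ≤ (2 * π) ^ (-(1:ℝ)/2) * (2 * Real.sqrt ε) := by
      have hginteg : IntegrableOn
          (fun t : ℝ => (2 * π) ^ (-(1:ℝ)/2) * t ^ (-(1:ℝ)/2)) (Ioc 0 ε) := by
        have := (intervalIntegral.intervalIntegrable_rpow' (a := 0) (b := ε)
          (by norm_num : (-1:ℝ) < -(1:ℝ)/2)).1
        exact this.const_mul _
      have s1 : I0 ≤ ∫ t in Ioc (0:ℝ) ε, (2 * π) ^ (-(1:ℝ)/2) * t ^ (-(1:ℝ)/2) := by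
        refine setIntegral_mono_on
          ((F_integrableOn hα a x).mono_set Ioc_subset_Ioi_self)
          hginteg measurableSet_Ioc fun t ht => ?_
        have h1 := F_le_phi hα ht.1 a x
        have h2 : phi α t ≤ (2 * π) ^ (-(1:ℝ)/2) * t ^ (-(1:ℝ)/2) := by
          unfold phi
          have hnn : (0:ℝ) ≤ (2 * π) ^ (-(1:ℝ)/2) * t ^ (-(1:ℝ)/2) :=
            mul_nonneg (by positivity) (Real.rpow_nonneg ht.1.le _)
          have h3 : Real.exp (-α * t) ≤ 1 := by
            rw [Real.exp_le_one_iff]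
            nlinarith [ht.1]
          exact mul_le_of_le_one_right hnn h3
        linarith
      have s2 : ∫ t in Ioc (0:ℝ) ε, (2 * π) ^ (-(1:ℝ)/2) * t ^ (-(1:ℝ)/2)
          = (2 * π) ^ (-(1:ℝ)/2) * (2 * Real.sqrt ε) := by
        rw [integral_const_mul, sqrt_integral hε]
      linarith
    have heq : gResReg1 α ε a x - gRes1 α a x
        = (Real.exp (α * ε) - 1) * I1 - I0 := by
      rw [shift_eq α hε a x, split_eq hα hε a x]
      ring
    rw [heq]
    have hexp : (0:ℝ) ≤ Real.exp (α * ε) - 1 := by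
      have := Real.one_le_exp (by positivity : (0:ℝ) ≤ α * ε)
      linarith
    calc |(Real.exp (α * ε) - 1) * I1 - I0|
        ≤ |(Real.exp (α * ε) - 1) * I1| + |I0| := abs_sub _ _
      _ = (Real.exp (α * ε) - 1) * I1 + I0 := by
          rw [abs_of_nonneg (mul_nonneg hexp hI1nonneg), abs_of_nonneg hI0nonneg]
      _ ≤ (Real.exp (α * ε) - 1) * C + (2 * π) ^ (-(1:ℝ)/2) * (2 * Real.sqrt ε) := by
          have := mul_le_mul_of_nonneg_left hI1le hexp
          linarith
  -- squeeze
  have hBtend : Tendsto B (nhdsWithin 0 (Ioi 0)) (nhds 0) := by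
    have hcont : Continuous B := by
      simp only [hBdef]
      exact (((Real.continuous_exp.comp (continuous_const.mul continuous_id)).sub
        continuous_const).mul continuous_const).add
        (continuous_const.mul (continuous_const.mul Real.continuous_sqrt))
    have h0 : B 0 = 0 := by simp [hBdef]
    have := hcont.tendsto 0
    rw [h0] at this
    exact this.mono_left nhdsWithin_le_nhds
  refine tendsto_of_tendsto_of_tendsto_of_le_of_le' tendsto_const_nhds hBtend ?_ ?_
  · exact Eventually.of_forall fun ε =>
      Real.iSup_nonneg fun x => Real.iSup_nonneg fun y => abs_nonneg _
  · filter_upwards [self_mem_nhdsWithin] with ε hε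
    exact Real.iSup_le
      (fun x => Real.iSup_le (fun y => key ε hε x y) (hBnonneg ε hε))
      (hBnonneg ε hε)
end
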